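/- Fix n ≥ 2, b_1,...,b_n ∈ (0,1), r' > 1 with ∑_{i=1}^n b_i^{r'} = 1, and r with 1/r + 1/r' = 1. For each l, the vector x_l = ∑_{s ∈ {1,...,n}^l} (∏_i b_{s_i})^{r'/r} e_s has Tsirelson norm exactly 1 in T(A_n, b̄): namely ‖x_l‖_{T(A_n,b̄)} = 1. -/

import Mathlib

/-- The norming set `W[(𝒜_n, b̄)]` of the Tsirelson-type space `T(𝒜_n, b̄)`. -/
inductive IsW (n : ℕ) (b : Fin n → ℝ) : (ℕ →₀ ℝ) → Prop
  | unit (k : ℕ) (ε : ℝ) (hε : ε = 1 ∨ ε = -1) : IsW n b (Finsupp.single k ε)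
  | combine (a : ℕ) (ha : 1 ≤ a) (han : a ≤ n) (f : Fin a → (ℕ →₀ ℝ))
      (hf : ∀ i, IsW n b (f i))
      (hsucc : ∀ i j : Fin a, i < j → ∀ p ∈ (f i).support, ∀ q ∈ (f j).support, p < q) :
      IsW n b (∑ i : Fin a, b (Fin.castLE han i) • f i)

/-- The Tsirelson-type norm: `‖x‖ = sup { ⟨f, x⟩ : f ∈ W[(𝒜_n, b̄)] }`. -/
noncomputable def tnorm (n : ℕ) (b : Fin n → ℝ) (x : ℕ →₀ ℝ) : ℝ :=
  sSup {y | ∃ f : ℕ →₀ ℝ, IsW n b f ∧ y = f.sum fun k c => c * x k}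

/-- The identification of `M_l = {1,…,n}^l` with the interval `{0,…,n^l - 1}` of `ℕ`,
via the lexicographic (most-significant-digit-first) base-`n` enumeration. -/
def enc (n l : ℕ) (s : Fin l → Fin n) : ℕ :=
  ∑ i : Fin l, (s i : ℕ) * n ^ (l - 1 - (i : ℕ))

/-! ### Auxiliary lemmas -/

lemma enc_succ (n l : ℕ) (s : Fin (l+1) → Fin n) :
    enc n (l+1) s = enc n l (fun j => s j.succ) + (s 0 : ℕ) * n ^ l := by
  unfold enc
  rw [Fin.sum_univ_succ]
  simp only [Fin.val_zero, Fin.val_succ, Nat.sub_zero, Nat.add_sub_cancel]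
  rw [add_comm]
  congr 1
  apply Finset.sum_congr rfl
  intro j _
  congr 2
  omega

lemma enc_lt (n l : ℕ) (hn : 1 ≤ n) (s : Fin l → Fin n) : enc n l s < n ^ l := by
  induction l with
  | zero => simp [enc]
  | succ l ih =>
    rw [enc_succ]
    have h1 := ih (fun j => s j.succ)
    have h2 : (s 0 : ℕ) + 1 ≤ n := (s 0).isLt
    calc enc n l (fun j => s j.succ) + (s 0 : ℕ) * n ^ l
        < n ^ l + (s 0 : ℕ) * n ^ l := by omega
      _ = ((s 0 : ℕ) + 1) * n ^ l := by ring
      _ ≤ n * n ^ l := Nat.mul_le_mul_right _ h2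
      _ = n ^ (l+1) := by ring

lemma enc_inj (n l : ℕ) (hn : 1 ≤ n) : Function.Injective (enc n l) := by
  induction l with
  | zero => intro s t _; funext i; exact i.elim0
  | succ l ih =>
    intro s t heq
    have hm : 0 < n ^ l := Nat.pow_pos hn
    have ha := enc_lt n l hn (fun j => s j.succ)
    have hc := enc_lt n l hn (fun j => t j.succ)
    rw [enc_succ, enc_succ] at heq
    have h1 : enc n l (fun j => s j.succ) = enc n l (fun j => t j.succ) := by
      have := congrArg (· % n ^ l) heq
      simpa [Nat.add_mul_mod_self_right, Nat.mod_eq_of_lt ha, Nat.mod_eq_of_lt hc] using this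
    have h2 : (s 0 : ℕ) = (t 0 : ℕ) := by
      have : (s 0 : ℕ) * n ^ l = (t 0 : ℕ) * n ^ l := by omega
      exact Nat.eq_of_mul_eq_mul_right hm this
    have h3 := ih h1
    funext i
    refine Fin.cases ?_ ?_ i
    · exact Fin.val_injective h2
    · intro j; exact congrFun h3 j

/-- Shift of a finitely supported function. -/
noncomputable def shf (m : ℕ) (f : ℕ →₀ ℝ) : ℕ →₀ ℝ := Finsupp.mapDomain (· + m) f

lemma shf_single (m k : ℕ) (v : ℝ) : shf m (Finsupp.single k v) = Finsupp.single (k + m) v :=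
  Finsupp.mapDomain_single

lemma shf_sum {ι : Type*} (m : ℕ) (s : Finset ι) (g : ι → ℕ →₀ ℝ) :
    shf m (∑ i ∈ s, g i) = ∑ i ∈ s, shf m (g i) :=
  Finsupp.mapDomain_finset_sum

lemma shf_smul (m : ℕ) (c : ℝ) (f : ℕ →₀ ℝ) : shf m (c • f) = c • shf m f :=
  Finsupp.mapDomain_smul c f

lemma shf_support (m : ℕ) (f : ℕ →₀ ℝ) :
    (shf m f).support ⊆ f.support.image (· + m) :=
  Finsupp.mapDomain_support

lemma isW_shf {n : ℕ} {b : Fin n → ℝ} (m : ℕ) {f : ℕ →₀ ℝ} (h : IsW n b f) :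
    IsW n b (shf m f) := by
  induction h with
  | unit k ε hε => rw [shf_single]; exact .unit _ _ hε
  | combine a ha han f hf hsucc ih =>
    rw [shf_sum]
    have : ∀ i : Fin a, shf m (b (Fin.castLE han i) • f i) = b (Fin.castLE han i) • shf m (f i) :=
      fun i => shf_smul _ _ _
    rw [Finset.sum_congr rfl fun i _ => this i]
    refine IsW.combine a ha han _ ih ?_
    intro i j hij p hp q hq
    obtain ⟨p', hp', rfl⟩ := Finset.mem_image.mp (shf_support m (f i) hp)
    obtain ⟨q', hq', rfl⟩ := Finset.mem_image.mp (shf_support m (f j) hq)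
    have := hsucc i j hij p' hp' q' hq'
    omega

/-- The norming functional `F_l = ∑_s (∏_i b_{s_i}) e_s^*`. -/
noncomputable def Fl (n : ℕ) (b : Fin n → ℝ) (l : ℕ) : ℕ →₀ ℝ :=
  ∑ s : Fin l → Fin n, Finsupp.single (enc n l s) (∏ i, b (s i))

lemma Fl_support (n : ℕ) (b : Fin n → ℝ) (l : ℕ) (hn : 1 ≤ n) :
    (Fl n b l).support ⊆ Finset.range (n ^ l) := by
  refine (Finsupp.support_finset_sum).trans ?_
  intro k hk
  simp only [Finset.mem_biUnion] at hk
  obtain ⟨s, _, hk⟩ := hk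
  have := Finsupp.support_single_subset hk
  simp only [Finset.mem_singleton] at this
  subst this
  exact Finset.mem_range.mpr (enc_lt n l hn s)

lemma Fl_succ (n : ℕ) (b : Fin n → ℝ) (l : ℕ) :
    Fl n b (l+1) = ∑ i : Fin n, b i • shf ((i : ℕ) * n ^ l) (Fl n b l) := by
  rw [Fl, ← Equiv.sum_comp (Fin.consEquiv (fun _ : Fin (l+1) => Fin n))
    (fun s => Finsupp.single (enc n (l+1) s) (∏ i, b (s i)))]
  rw [Fintype.sum_prod_type]
  apply Finset.sum_congr rfl
  intro i _
  rw [Fl, shf_sum, Finset.smul_sum]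
  apply Finset.sum_congr rfl
  intro t _
  rw [shf_single, Finsupp.smul_single]
  congr 1
  · rw [enc_succ]
    simp [Fin.consEquiv]
  · rw [smul_eq_mul]
    have : (∏ j, b ((Fin.consEquiv (fun _ : Fin (l+1) => Fin n) (i, t)) j))
        = b i * ∏ j, b (t j) := by
      rw [Fin.prod_univ_succ]
      simp [Fin.consEquiv]
    rw [this]

lemma isW_Fl (n : ℕ) (b : Fin n → ℝ) (hn : 1 ≤ n) (l : ℕ) : IsW n b (Fl n b l) := by
  induction l with
  | zero =>
    have : Fl n b 0 = Finsupp.single 0 1 := by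
      rw [Fl]
      rw [Fintype.sum_unique]
      simp [enc]
    rw [this]
    exact .unit 0 1 (Or.inl rfl)
  | succ l ih =>
    rw [Fl_succ]
    have : (∑ i : Fin n, b i • shf ((i : ℕ) * n ^ l) (Fl n b l))
        = ∑ i : Fin n, b (Fin.castLE (le_refl n) i) • shf ((i : ℕ) * n ^ l) (Fl n b l) := rfl
    rw [this]
    refine IsW.combine n hn (le_refl n) _ (fun i => isW_shf _ ih) ?_
    intro i j hij p hp q hq
    obtain ⟨p', hp', rfl⟩ := Finset.mem_image.mp (shf_support _ _ hp)
    obtain ⟨q', hq', rfl⟩ := Finset.mem_image.mp (shf_support _ _ hq)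
    have hp2 : p' < n ^ l := Finset.mem_range.mp (Fl_support n b l hn hp')
    have hij' : (i : ℕ) + 1 ≤ (j : ℕ) := hij
    calc p' + (i : ℕ) * n ^ l < n ^ l + (i : ℕ) * n ^ l := by omega
      _ = ((i : ℕ) + 1) * n ^ l := by ring
      _ ≤ (j : ℕ) * n ^ l := Nat.mul_le_mul_right _ hij'
      _ ≤ q' + (j : ℕ) * n ^ l := Nat.le_add_left _ _

lemma evalL (x f : ℕ →₀ ℝ) :
    (f.sum fun k c => c * x k) = Finsupp.linearCombination ℝ (fun k => x k) f := by
  rw [Finsupp.linearCombination_apply]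
  rfl

/-- Every functional in `W` is bounded by the `ℓ_r` norm over its support. -/
lemma W_le {n : ℕ} {b : Fin n → ℝ} (hb : ∀ i, 0 < b i) {r r' : ℝ}
    (hconj : r'.HolderConjugate r) (hsum : ∑ i, b i ^ r' = 1)
    {f : ℕ →₀ ℝ} (hW : IsW n b f) (x : ℕ →₀ ℝ) :
    (f.sum fun k c => c * x k) ≤ (∑ k ∈ f.support, |x k| ^ r) ^ (1 / r) := by
  have hr0 : 0 < r := hconj.symm.pos
  induction hW with
  | unit k ε hε =>
    have hε0 : ε ≠ 0 := by rcases hε with h | h <;> rw [h] <;> norm_num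
    rw [Finsupp.sum_single_index (by ring), Finsupp.support_single_ne_zero _ hε0,
      Finset.sum_singleton]
    have h2 : (|x k| ^ r) ^ (1 / r) = |x k| := by
      rw [← Real.rpow_mul (abs_nonneg _), mul_one_div_cancel hr0.ne', Real.rpow_one]
    rw [h2]
    rcases hε with h | h <;> rw [h]
    · rw [one_mul]; exact le_abs_self _
    · rw [neg_one_mul]; exact neg_le_abs _
  | combine a ha han g hg hsucc ih =>
    classical
    have hdisj : ∀ i j : Fin a, i ≠ j → Disjoint (g i).support (g j).support := by
      intro i j hij
      rcases lt_or_gt_of_ne hij with h | h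
      · rw [Finset.disjoint_left]
        intro p hp hq
        exact absurd (hsucc i j h p hp p hq) (lt_irrefl p)
      · rw [Finset.disjoint_right]
        intro p hp hq
        exact absurd (hsucc j i h p hp p hq) (lt_irrefl p)
    have hb0 : ∀ i : Fin a, b (Fin.castLE han i) ≠ 0 := fun i => (hb _).ne'
    have hdisj' : ∀ i j : Fin a, i ≠ j →
        Disjoint (b (Fin.castLE han i) • g i).support (b (Fin.castLE han j) • g j).support := by
      intro i j hij
      rw [Finsupp.support_smul_eq (hb0 i), Finsupp.support_smul_eq (hb0 j)]
      exact hdisj i j hij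
    have hsupp : (∑ i : Fin a, b (Fin.castLE han i) • g i).support
        = Finset.univ.biUnion fun i => (g i).support := by
      rw [Finsupp.support_sum_eq_biUnion _ hdisj']
      apply Finset.biUnion_congr rfl
      intro i _
      exact Finsupp.support_smul_eq (hb0 i)
    have hlin : ((∑ i : Fin a, b (Fin.castLE han i) • g i).sum fun k c => c * x k)
        = ∑ i : Fin a, b (Fin.castLE han i) * ((g i).sum fun k c => c * x k) := by
      rw [evalL, map_sum]
      apply Finset.sum_congr rfl
      intro i _
      rw [LinearMap.map_smul, evalL, smul_eq_mul]
    rw [hlin]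
    set S : Fin a → ℝ := fun i => ∑ k ∈ (g i).support, |x k| ^ r with hS
    have hSnn : ∀ i, 0 ≤ S i := fun i =>
      Finset.sum_nonneg fun k _ => Real.rpow_nonneg (abs_nonneg _) r
    have step2 : ∑ i : Fin a, b (Fin.castLE han i) * ((g i).sum fun k c => c * x k)
        ≤ ∑ i : Fin a, b (Fin.castLE han i) * (S i) ^ (1 / r) := by
      apply Finset.sum_le_sum
      intro i _
      exact mul_le_mul_of_nonneg_left (ih i) (hb _).le
    have step3 : ∑ i : Fin a, b (Fin.castLE han i) * (S i) ^ (1 / r)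
        ≤ (∑ i : Fin a, b (Fin.castLE han i) ^ r') ^ (1 / r')
            * (∑ i : Fin a, ((S i) ^ (1 / r)) ^ r) ^ (1 / r) :=
      Real.inner_le_Lp_mul_Lq_of_nonneg Finset.univ hconj (fun i _ => (hb _).le)
        (fun i _ => Real.rpow_nonneg (hSnn i) _)
    have step4 : ∀ i : Fin a, ((S i) ^ (1 / r)) ^ r = S i := by
      intro i
      rw [← Real.rpow_mul (hSnn i), one_div_mul_cancel hr0.ne', Real.rpow_one]
    have step5 : (∑ i : Fin a, b (Fin.castLE han i) ^ r') ^ (1 / r') ≤ 1 := by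
      apply Real.rpow_le_one
      · exact Finset.sum_nonneg fun i _ => Real.rpow_nonneg (hb _).le _
      · calc ∑ i : Fin a, b (Fin.castLE han i) ^ r'
            = ∑ j ∈ Finset.univ.image (Fin.castLE han), b j ^ r' := by
              rw [Finset.sum_image (fun i _ j _ h => Fin.castLE_injective han h)]
          _ ≤ ∑ j : Fin n, b j ^ r' :=
              Finset.sum_le_sum_of_subset_of_nonneg (Finset.subset_univ _)
                (fun j _ _ => Real.rpow_nonneg (hb _).le _)
          _ = 1 := hsum
      · exact (one_div_pos.mpr hconj.pos).le
    have step6 : ∑ i : Fin a, S i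
        = ∑ k ∈ (∑ i : Fin a, b (Fin.castLE han i) • g i).support, |x k| ^ r := by
      rw [hsupp, Finset.sum_biUnion]
      intro i _ j _ hij
      exact hdisj i j hij
    calc ∑ i : Fin a, b (Fin.castLE han i) * ((g i).sum fun k c => c * x k)
        ≤ ∑ i : Fin a, b (Fin.castLE han i) * (S i) ^ (1 / r) := step2
      _ ≤ (∑ i : Fin a, b (Fin.castLE han i) ^ r') ^ (1 / r')
            * (∑ i : Fin a, ((S i) ^ (1 / r)) ^ r) ^ (1 / r) := step3
      _ = (∑ i : Fin a, b (Fin.castLE han i) ^ r') ^ (1 / r')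
            * (∑ i : Fin a, S i) ^ (1 / r) := by
          congr 2
          exact Finset.sum_congr rfl fun i _ => step4 i
      _ ≤ 1 * (∑ i : Fin a, S i) ^ (1 / r) := by
          apply mul_le_mul_of_nonneg_right step5
          exact Real.rpow_nonneg (Finset.sum_nonneg fun i _ => hSnn i) _
      _ = (∑ k ∈ (∑ i : Fin a, b (Fin.castLE han i) • g i).support, |x k| ^ r) ^ (1 / r) := by
          rw [one_mul, step6]

/-- the vector `x_l = ∑_{s ∈ M_l} (∏_i b_{s_i})^{r'/r} e_s` has Tsirelson
norm exactly `1` in `T(𝒜_n, b̄)`. -/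
theorem stmt_9 (n : ℕ) (hn : 2 ≤ n) (b : Fin n → ℝ) (hb : ∀ i, 0 < b i ∧ b i < 1)
    (r r' : ℝ) (hr' : 1 < r') (hrr' : 1 / r + 1 / r' = 1)
    (hsum : ∑ i, b i ^ r' = 1) (l : ℕ) :
    tnorm n b (∑ s : Fin l → Fin n,
      ((∏ i, b (s i)) ^ (r' / r)) • Finsupp.single (enc n l s) (1 : ℝ)) = 1 := by
  classical
  have hn1 : 1 ≤ n := le_trans one_le_two hn
  have hb1 : ∀ i, 0 < b i := fun i => (hb i).1
  have hr'0 : 0 < r' := lt_trans one_pos hr'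
  have h1r' : 1 / r' < 1 := (div_lt_one hr'0).mpr hr'
  have hr0 : 0 < r := one_div_pos.mp (by linarith)
  have hconj : r'.HolderConjugate r := Real.holderConjugate_iff.mpr ⟨hr', by rw [inv_eq_one_div, inv_eq_one_div]; linarith⟩
  -- notation
  set c : (Fin l → Fin n) → ℝ := fun s => (∏ i, b (s i)) ^ (r' / r) with hcdef
  set x : ℕ →₀ ℝ := ∑ s : Fin l → Fin n, (c s) • Finsupp.single (enc n l s) (1 : ℝ) with hxdef
  have hd : ∀ s : Fin l → Fin n, 0 < ∏ i, b (s i) :=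
    fun s => Finset.prod_pos fun i _ => hb1 _
  have hc : ∀ s, 0 < c s := fun s => Real.rpow_pos_of_pos (hd s) _
  have hx' : x = ∑ s : Fin l → Fin n, Finsupp.single (enc n l s) (c s) := by
    rw [hxdef]
    apply Finset.sum_congr rfl
    intro s _
    rw [Finsupp.smul_single, smul_eq_mul, mul_one]
  -- evaluation of x
  have heval : ∀ t : Fin l → Fin n, x (enc n l t) = c t := by
    intro t
    rw [hx', Finsupp.finset_sum_apply]
    have hterm : ∀ s ∈ Finset.univ, (Finsupp.single (enc n l s) (c s)) (enc n l t)
        = if s = t then c t else 0 := by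
      intro s _
      rw [Finsupp.single_apply]
      by_cases h : s = t
      · subst h; simp
      · rw [if_neg (fun hh => h ((enc_inj n l hn1) hh)), if_neg h]
    rw [Finset.sum_congr rfl hterm, Finset.sum_ite_eq' Finset.univ t fun _ => c t]
    simp
  -- support of x
  have hsuppx : x.support = Finset.univ.image (enc n l) := by
    apply Finset.Subset.antisymm
    · refine (hx' ▸ Finsupp.support_finset_sum).trans ?_
      intro k hk
      simp only [Finset.mem_biUnion] at hk
      obtain ⟨s, _, hk⟩ := hk
      have h2 := Finsupp.support_single_subset hk
      simp only [Finset.mem_singleton] at h2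
      subst h2
      exact Finset.mem_image_of_mem _ (Finset.mem_univ s)
    · intro k hk
      obtain ⟨s, _, rfl⟩ := Finset.mem_image.mp hk
      exact Finsupp.mem_support_iff.mpr (by rw [heval s]; exact (hc s).ne')
  have hcr : ∀ s : Fin l → Fin n, (c s) ^ r = (∏ i, b (s i)) ^ r' := by
    intro s
    show ((∏ i, b (s i)) ^ (r' / r)) ^ r = _
    rw [← Real.rpow_mul (hd s).le, div_mul_cancel₀ _ hr0.ne']
  -- the ℓ_r mass of x is 1
  have hTsum : ∑ s : Fin l → Fin n, (∏ i, b (s i)) ^ r' = 1 := by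
    calc ∑ s : Fin l → Fin n, (∏ i, b (s i)) ^ r'
        = ∑ s : Fin l → Fin n, ∏ i, (b (s i)) ^ r' :=
          Finset.sum_congr rfl fun s _ =>
            (Real.finset_prod_rpow _ _ (fun i _ => (hb1 _).le) _).symm
      _ = ∏ _i : Fin l, ∑ j : Fin n, b j ^ r' := by
          rw [Finset.prod_univ_sum]
          rw [← Fintype.piFinset_univ]
      _ = 1 := by rw [hsum]; exact Finset.prod_const_one
  have hmass : ∑ k ∈ x.support, |x k| ^ r = 1 := by
    rw [hsuppx, Finset.sum_image (fun s _ t _ h => (enc_inj n l hn1) h)]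
    calc ∑ s : Fin l → Fin n, |x (enc n l s)| ^ r
        = ∑ s : Fin l → Fin n, (∏ i, b (s i)) ^ r' := by
          apply Finset.sum_congr rfl
          intro s _
          rw [heval s, abs_of_pos (hc s), hcr s]
      _ = 1 := hTsum
  -- upper bound
  have hub : ∀ y ∈ {y | ∃ f : ℕ →₀ ℝ, IsW n b f ∧ y = f.sum fun k c => c * x k}, y ≤ 1 := by
    rintro y ⟨f, hW, rfl⟩
    have h1 := W_le hb1 hconj hsum hW x
    have h2 : ∑ k ∈ f.support, |x k| ^ r ≤ ∑ k ∈ f.support ∪ x.support, |x k| ^ r :=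
      Finset.sum_le_sum_of_subset_of_nonneg Finset.subset_union_left
        (fun k _ _ => Real.rpow_nonneg (abs_nonneg _) _)
    have h3 : ∑ k ∈ x.support, |x k| ^ r = ∑ k ∈ f.support ∪ x.support, |x k| ^ r :=
      Finset.sum_subset Finset.subset_union_right (fun k _ hk => by
        rw [Finsupp.notMem_support_iff.mp hk, abs_zero, Real.zero_rpow hr0.ne'])
    have h4 : ∑ k ∈ f.support, |x k| ^ r ≤ 1 := by
      rw [← hmass] at *
      linarith [h2, h3.ge]
    calc (f.sum fun k c => c * x k) ≤ (∑ k ∈ f.support, |x k| ^ r) ^ (1 / r) := h1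
      _ ≤ 1 := Real.rpow_le_one
          (Finset.sum_nonneg fun k _ => Real.rpow_nonneg (abs_nonneg _) _) h4
          (one_div_pos.mpr hr0).le
  -- lower bound: the functional Fl attains 1
  have hdiv : r' / r = r' - 1 := by
    have h1r : 1 / r = 1 - 1 / r' := by linarith
    calc r' / r = r' * (1 / r) := by ring
      _ = r' * (1 - 1 / r') := by rw [h1r]
      _ = r' - r' * (1 / r') := by ring
      _ = r' - 1 := by rw [mul_one_div, div_self hr'0.ne']
  have hlow : (1 : ℝ) ∈ {y | ∃ f : ℕ →₀ ℝ, IsW n b f ∧ y = f.sum fun k c => c * x k} := by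
    refine ⟨Fl n b l, isW_Fl n b hn1 l, ?_⟩
    rw [evalL, Fl, map_sum]
    have : ∀ s : Fin l → Fin n,
        Finsupp.linearCombination ℝ (fun k => x k) (Finsupp.single (enc n l s) (∏ i, b (s i)))
        = (∏ i, b (s i)) ^ r' := by
      intro s
      rw [Finsupp.linearCombination_single, smul_eq_mul, heval s]
      show (∏ i, b (s i)) * (∏ i, b (s i)) ^ (r' / r) = _
      calc (∏ i, b (s i)) * (∏ i, b (s i)) ^ (r' / r)
          = (∏ i, b (s i)) ^ (1 : ℝ) * (∏ i, b (s i)) ^ (r' / r) := by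
            rw [Real.rpow_one]
        _ = (∏ i, b (s i)) ^ (1 + r' / r) := (Real.rpow_add (hd s) _ _).symm
        _ = (∏ i, b (s i)) ^ r' := by rw [hdiv]; ring_nf
    rw [Finset.sum_congr rfl fun s _ => this s, hTsum]
  -- conclude
  rw [tnorm]
  apply le_antisymm
  · exact csSup_le ⟨1, hlow⟩ hub
  · exact le_csSup ⟨1, hub⟩ hlow
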